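/- The F_III Yang-Baxter map R(x,y) = (y·(px-qy)/(p(x-y)), x·(px-qy)/(q(x-y))) is an involution wherever defined. -/

import Mathlib

/-- The `F_III` Yang-Baxter map `R(x,y) = ((y/p)·W, (x/q)·W)`, `W = (px-qy)/(x-y)`. -/
noncomputable def FIII {K : Type*} [Field K] (p q : K) (P : K × K) : K × K :=
  (P.2 / p * ((p * P.1 - q * P.2) / (P.1 - P.2)),
   P.1 / q * ((p * P.1 - q * P.2) / (P.1 - P.2)))

/-- The `F_III` map is an involution wherever defined. -/
theorem FIII_involution {K : Type*} [Field K] [CharZero K] (p q x y : K)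
    (hp : p ≠ 0) (hq : q ≠ 0) (h1 : x - y ≠ 0)
    (h2 : (FIII p q (x, y)).1 - (FIII p q (x, y)).2 ≠ 0) :
    FIII p q (FIII p q (x, y)) = (x, y) := by
  have hW : p * x - q * y ≠ 0 := by
    intro h
    apply h2
    simp [FIII, h]
  simp only [FIII] at h2 ⊢
  simp only [Prod.mk.injEq]
  constructor <;> field_simp at h2 ⊢
  · rw [div_eq_iff (by intro h; apply hW; linear_combination -h)]; ring
  · rw [div_eq_iff (by intro h; apply hW; linear_combination -h)]; ring
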